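/- arXiv:2202.12697 — 2 statements merged into one kernel-verified Lean document; each statement's English description precedes it below -/
import Mathlib

section
/- For all parameters A, B, C ∈ ℂ with C ≠ 0, C ≠ 1 and (C;q)_n ≠ 0 for all n, all x ∈ ℂ with |x| < 1, and all y ∈ ℂ with 0 < |y| < 1, one has (D_q g)(y) = (1/(1−q))·[((1−A/C)/(1−C))·Φ₁(A,B;qC;q,q₁;x,y) + (A/C)·Φ₁(A,B;C;q,q₁;x,y)], where g is the function y ↦ Φ₁(A,B;C;q,q₁;x,y) and D_q is the Jackson q-derivative in y. (Equation (2.21), with q^{a−c} = A/C.) -/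
open Complex

/-- The q-shifted factorial (z;q)_n = prod_{r=0}^{n-1} (1 - z q^r). -/
noncomputable def qPoch (q z : ℂ) (n : ℕ) : ℂ :=
  ∏ r ∈ Finset.range n, (1 - z * q ^ r)

/-- The bibasic Humbert hypergeometric function Φ₁ on two independent bases q and q₁. -/
noncomputable def Phi1 (q q1 A B C x y : ℂ) : ℂ :=
  ∑' p : ℕ × ℕ,
    qPoch q A (p.1 + p.2) * qPoch q1 B p.1 /
      (qPoch q C (p.1 + p.2) * qPoch q1 q1 p.1 * qPoch q q p.2) * x ^ p.1 * y ^ p.2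

/-- The Jackson p-derivative. -/
noncomputable def jackson (p : ℂ) (f : ℂ → ℂ) (x : ℂ) : ℂ :=
  (f x - f (p * x)) / ((1 - p) * x)


/-- The complex absolute value, as an absolute value given by the norm. -/
noncomputable def Complex.abs : AbsoluteValue ℂ ℝ where
  toFun := fun z => ‖z‖
  map_mul' := norm_mul
  nonneg' := norm_nonneg
  eq_zero' := fun _ => norm_eq_zero
  add_le' := norm_add_le

lemma Complex.norm_eq_abs (z : ℂ) : ‖z‖ = Complex.abs z := rfl

/-- The general term of the Φ₁ series. -/
noncomputable def hterm (q q1 A B C x y : ℂ) (p : ℕ × ℕ) : ℂ :=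
  qPoch q A (p.1 + p.2) * qPoch q1 B p.1 /
    (qPoch q C (p.1 + p.2) * qPoch q1 q1 p.1 * qPoch q q p.2) * x ^ p.1 * y ^ p.2

lemma Phi1_eq_tsum (q q1 A B C x y : ℂ) :
    Phi1 q q1 A B C x y = ∑' p : ℕ × ℕ, hterm q q1 A B C x y p := rfl

lemma qPoch_succ (q z : ℂ) (n : ℕ) :
    qPoch q z (n + 1) = qPoch q z n * (1 - z * q ^ n) :=
  Finset.prod_range_succ _ n

lemma qPoch_shift (q C : ℂ) (n : ℕ) :
    (1 - C) * qPoch q (q * C) n = qPoch q C (n + 1) := by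
  induction n with
  | zero => simp [qPoch]
  | succ n ih =>
    rw [qPoch_succ q (q * C) n, qPoch_succ q C (n + 1), ← ih]
    ring

lemma qPoch_base_ne_zero (q : ℂ) (hq : Complex.abs q < 1) (n : ℕ) :
    qPoch q q n ≠ 0 := by
  refine Finset.prod_ne_zero_iff.mpr fun r _ h => ?_
  have h1 : q * q ^ r = 1 := by linear_combination -h
  have h2 : Complex.abs (q * q ^ r) < 1 := by
    rw [map_mul, map_pow]
    calc Complex.abs q * Complex.abs q ^ r ≤ Complex.abs q * 1 :=
          mul_le_mul_of_nonneg_left (pow_le_one₀ (Complex.abs.nonneg q) hq.le)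
            (Complex.abs.nonneg q)
      _ < 1 := by simpa using hq
  rw [h1] at h2
  simp at h2

lemma geom_partial_le (ρ : ℝ) (h0 : 0 ≤ ρ) (h1 : ρ < 1) (s : Finset ℕ) :
    ∑ r ∈ s, ρ ^ r ≤ (1 - ρ)⁻¹ := by
  have hsum : Summable (fun r : ℕ => ρ ^ r) := summable_geometric_of_lt_one h0 h1
  calc ∑ r ∈ s, ρ ^ r ≤ ∑' r : ℕ, ρ ^ r :=
        Summable.sum_le_tsum s (fun i _ => pow_nonneg h0 i) hsum
    _ = (1 - ρ)⁻¹ := tsum_geometric_of_lt_one h0 h1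

lemma qPoch_upper (q z : ℂ) (hq : Complex.abs q < 1) (n : ℕ) :
    Complex.abs (qPoch q z n) ≤ Real.exp (Complex.abs z * (1 - Complex.abs q)⁻¹) := by
  rw [qPoch, map_prod]
  calc ∏ r ∈ Finset.range n, Complex.abs (1 - z * q ^ r)
      ≤ ∏ r ∈ Finset.range n, Real.exp (Complex.abs z * Complex.abs q ^ r) := by
        apply Finset.prod_le_prod (fun r _ => Complex.abs.nonneg _)
        intro r _
        calc Complex.abs (1 - z * q ^ r) ≤ 1 + Complex.abs z * Complex.abs q ^ r := by
              have := norm_sub_le (1:ℂ) (z * q ^ r)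
              simpa [Complex.norm_eq_abs, map_mul, map_pow] using this
          _ ≤ Real.exp (Complex.abs z * Complex.abs q ^ r) := by
              have := Real.add_one_le_exp (Complex.abs z * Complex.abs q ^ r)
              linarith
    _ = Real.exp (∑ r ∈ Finset.range n, Complex.abs z * Complex.abs q ^ r) :=
        (Real.exp_sum _ _).symm
    _ ≤ Real.exp (Complex.abs z * (1 - Complex.abs q)⁻¹) := by
        apply Real.exp_le_exp.mpr
        rw [← Finset.mul_sum]
        exact mul_le_mul_of_nonneg_left
          (geom_partial_le _ (Complex.abs.nonneg q) hq _) (Complex.abs.nonneg z)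

lemma one_sub_ge_exp (t : ℝ) (h0 : 0 ≤ t) (h1 : t ≤ 1/2) :
    Real.exp (-(2 * t)) ≤ 1 - t := by
  have h2 : (1:ℝ) + 2 * t ≤ Real.exp (2 * t) := by
    have := Real.add_one_le_exp (2 * t); linarith
  have hpos : (0:ℝ) < 1 + 2 * t := by linarith
  rw [Real.exp_neg]
  have h3 : (Real.exp (2 * t))⁻¹ ≤ (1 + 2 * t)⁻¹ := inv_anti₀ hpos h2
  have h4 : (1 + 2 * t)⁻¹ ≤ 1 - t := by
    rw [inv_le_iff_one_le_mul₀ hpos]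
    nlinarith
  linarith

lemma qPoch_lower (q z : ℂ) (hq : Complex.abs q < 1)
    (hz : ∀ n, qPoch q z n ≠ 0) :
    ∃ δ > 0, ∀ n, δ ≤ Complex.abs (qPoch q z n) := by
  have hq0 : (0:ℝ) ≤ Complex.abs q := Complex.abs.nonneg q
  have htend : Filter.Tendsto (fun r : ℕ => Complex.abs z * Complex.abs q ^ r)
      Filter.atTop (nhds 0) := by
    simpa using (tendsto_pow_atTop_nhds_zero_of_lt_one hq0 hq).const_mul (Complex.abs z)
  obtain ⟨N, hN⟩ :=
    (htend.eventually (eventually_le_nhds (by norm_num : (0:ℝ) < 1/2))).exists_forall_of_atTop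
  set E : ℝ := Real.exp (-(2 * (Complex.abs z * (1 - Complex.abs q)⁻¹))) with hE
  have hEpos : 0 < E := Real.exp_pos _
  have hE1 : E ≤ 1 := by
    rw [hE]
    apply Real.exp_le_one_iff.mpr
    have h1q : 0 < 1 - Complex.abs q := by linarith
    have : (0:ℝ) ≤ Complex.abs z * (1 - Complex.abs q)⁻¹ :=
      mul_nonneg (Complex.abs.nonneg z) (by positivity)
    linarith
  have hne : (Finset.range (N + 1)).Nonempty := ⟨0, by simp⟩
  set m : ℝ := (Finset.range (N + 1)).inf' hne (fun n => Complex.abs (qPoch q z n)) with hm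
  have hmpos : 0 < m := by
    rw [hm, Finset.lt_inf'_iff]
    intro i _
    exact Complex.abs.pos (hz i)
  refine ⟨m * E, mul_pos hmpos hEpos, fun n => ?_⟩
  by_cases hn : n ≤ N
  · have h1 : m ≤ Complex.abs (qPoch q z n) :=
      Finset.inf'_le _ (by simp [Nat.lt_succ_iff, hn])
    nlinarith
  · push_neg at hn
    have hNn : N ≤ n := hn.le
    have hsplit : qPoch q z n = qPoch q z N * ∏ r ∈ Finset.Ico N n, (1 - z * q ^ r) := by
      rw [qPoch, qPoch, Finset.prod_range_mul_prod_Ico _ hNn]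
    have hmN : m ≤ Complex.abs (qPoch q z N) := Finset.inf'_le _ (by simp)
    have hprod : E ≤ Complex.abs (∏ r ∈ Finset.Ico N n, (1 - z * q ^ r)) := by
      rw [map_prod]
      have step1 : ∏ r ∈ Finset.Ico N n, Real.exp (-(2 * (Complex.abs z * Complex.abs q ^ r)))
          ≤ ∏ r ∈ Finset.Ico N n, Complex.abs (1 - z * q ^ r) := by
        apply Finset.prod_le_prod (fun r _ => (Real.exp_pos _).le)
        intro r hr
        have hrN : N ≤ r := (Finset.mem_Ico.mp hr).1
        have ht : Complex.abs z * Complex.abs q ^ r ≤ 1/2 := hN r hrN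
        have ht0 : 0 ≤ Complex.abs z * Complex.abs q ^ r :=
          mul_nonneg (Complex.abs.nonneg z) (pow_nonneg hq0 r)
        calc Real.exp (-(2 * (Complex.abs z * Complex.abs q ^ r)))
            ≤ 1 - Complex.abs z * Complex.abs q ^ r := one_sub_ge_exp _ ht0 ht
          _ ≤ Complex.abs (1 - z * q ^ r) := by
              have := Complex.abs.le_sub 1 (z * q ^ r)
              simpa [map_mul, map_pow] using this
      refine le_trans ?_ step1
      rw [← Real.exp_sum]
      apply Real.exp_le_exp.mpr
      have heq : ∑ r ∈ Finset.Ico N n, -(2 * (Complex.abs z * Complex.abs q ^ r))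
          = -(2 * (Complex.abs z * ∑ r ∈ Finset.Ico N n, Complex.abs q ^ r)) := by
        rw [Finset.mul_sum, Finset.mul_sum, Finset.sum_neg_distrib]
      rw [heq]
      have hg := geom_partial_le (Complex.abs q) hq0 hq (Finset.Ico N n)
      nlinarith [Complex.abs.nonneg z]
    calc m * E
        ≤ Complex.abs (qPoch q z N) * Complex.abs (∏ r ∈ Finset.Ico N n, (1 - z * q ^ r)) :=
          mul_le_mul hmN hprod hEpos.le (Complex.abs.nonneg _)
      _ = Complex.abs (qPoch q z n) := by rw [hsplit, map_mul]

lemma summable_hterm (q q1 A B C x y : ℂ) (hq : Complex.abs q < 1)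
    (hq1 : Complex.abs q1 < 1) (hC : ∀ n, qPoch q C n ≠ 0)
    (hx : Complex.abs x < 1) (hy : Complex.abs y < 1) :
    Summable (hterm q q1 A B C x y) := by
  obtain ⟨δC, hδC, hlC⟩ := qPoch_lower q C hq hC
  obtain ⟨δ1, hδ1, hl1⟩ := qPoch_lower q1 q1 hq1 (qPoch_base_ne_zero q1 hq1)
  obtain ⟨δq, hδq, hlq⟩ := qPoch_lower q q hq (qPoch_base_ne_zero q hq)
  set MA : ℝ := Real.exp (Complex.abs A * (1 - Complex.abs q)⁻¹) with hMA
  set MB : ℝ := Real.exp (Complex.abs B * (1 - Complex.abs q1)⁻¹) with hMB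
  set K : ℝ := MA * MB / (δC * δ1 * δq) with hK
  have hcomp : Summable (fun p : ℕ × ℕ => K * (Complex.abs x ^ p.1 * Complex.abs y ^ p.2)) := by
    apply Summable.mul_left
    exact Summable.mul_of_nonneg
      (summable_geometric_of_lt_one (Complex.abs.nonneg x) hx)
      (summable_geometric_of_lt_one (Complex.abs.nonneg y) hy)
      (fun i => pow_nonneg (Complex.abs.nonneg x) i)
      (fun i => pow_nonneg (Complex.abs.nonneg y) i)
  apply Summable.of_norm
  apply Summable.of_nonneg_of_le (fun p => norm_nonneg _) _ hcomp
  intro p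
  rw [Complex.norm_eq_abs, hterm, map_mul, map_mul, map_div₀, map_mul, map_mul, map_mul,
    map_pow, map_pow]
  have hnum : Complex.abs (qPoch q A (p.1 + p.2)) * Complex.abs (qPoch q1 B p.1) ≤ MA * MB :=
    mul_le_mul (qPoch_upper q A hq _) (qPoch_upper q1 B hq1 _)
      (Complex.abs.nonneg _) (Real.exp_pos _).le
  have hden : δC * δ1 * δq ≤
      Complex.abs (qPoch q C (p.1 + p.2)) * Complex.abs (qPoch q1 q1 p.1) *
        Complex.abs (qPoch q q p.2) :=
    mul_le_mul (mul_le_mul (hlC _) (hl1 _) hδ1.le (Complex.abs.nonneg _))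
      (hlq _) hδq.le (mul_nonneg (Complex.abs.nonneg _) (Complex.abs.nonneg _))
  have hfrac : Complex.abs (qPoch q A (p.1 + p.2)) * Complex.abs (qPoch q1 B p.1) /
      (Complex.abs (qPoch q C (p.1 + p.2)) * Complex.abs (qPoch q1 q1 p.1) *
        Complex.abs (qPoch q q p.2)) ≤ K := by
    rw [hK]
    apply div_le_div₀ (by positivity) hnum (by positivity) hden
  calc Complex.abs (qPoch q A (p.1 + p.2)) * Complex.abs (qPoch q1 B p.1) /
        (Complex.abs (qPoch q C (p.1 + p.2)) * Complex.abs (qPoch q1 q1 p.1) *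
          Complex.abs (qPoch q q p.2)) * Complex.abs x ^ p.1 * Complex.abs y ^ p.2
      ≤ K * Complex.abs x ^ p.1 * Complex.abs y ^ p.2 := by
        apply mul_le_mul_of_nonneg_right _ (pow_nonneg (Complex.abs.nonneg y) _)
        exact mul_le_mul_of_nonneg_right hfrac (pow_nonneg (Complex.abs.nonneg x) _)
    _ = K * (Complex.abs x ^ p.1 * Complex.abs y ^ p.2) := by ring

lemma key_alg {K : Type*} [Field K] (a b c p1 pk xl yk qn qk q A C y : K)
    (hc : c ≠ 0) (hcf : 1 - C*qn ≠ 0) (hp1 : p1 ≠ 0) (hpk : pk ≠ 0)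
    (hqf : 1 - q*qk ≠ 0) (h1q : 1 - q ≠ 0) (hy : y ≠ 0) (hC0 : C ≠ 0) (h1C : 1 - C ≠ 0) :
    (a*(1 - A*qn) * b / (c*(1 - C*qn) * p1 * (pk*(1 - q*qk))) * xl * (yk*y)
      - a*(1 - A*qn) * b / (c*(1 - C*qn) * p1 * (pk*(1 - q*qk))) * xl * (qk*q*(yk*y))) / ((1-q)*y)
    = (1/(1-q)) * (((1-A/C)/(1-C)) * (a * b / (c*(1 - C*qn)/(1-C) * p1 * pk) * xl * yk)
        + (A/C) * (a * b / (c * p1 * pk) * xl * yk)) := by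
  generalize e2 : (1:K) - C*qn = u2 at hcf ⊢
  generalize e1 : (1:K) - A*qn = u1
  generalize e3 : (1:K) - q*qk = u3 at hqf ⊢
  generalize e4 : (1:K) - q = u4 at h1q ⊢
  generalize e5 : (1:K) - C = u5 at h1C ⊢
  have hD1 : c * u2 * p1 * (pk * u3) * (u4 * y) ≠ 0 :=
    mul_ne_zero (mul_ne_zero (mul_ne_zero (mul_ne_zero hc hcf) hp1) (mul_ne_zero hpk hqf))
      (mul_ne_zero h1q hy)
  have hD2 : u4 * (C * (c * p1 * pk)) ≠ 0 :=
    mul_ne_zero h1q (mul_ne_zero hC0 (mul_ne_zero (mul_ne_zero hc hp1) hpk))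
  have hG : C * u5 * (c * u2 * p1 * pk) ≠ 0 :=
    mul_ne_zero (mul_ne_zero hC0 h1C)
      (mul_ne_zero (mul_ne_zero (mul_ne_zero hc hcf) hp1) hpk)
  field_simp
  rw [← e1, ← e2, ← e3]
  ring

set_option maxHeartbeats 1000000 in
theorem stmt16 (q q1 A B C x y : ℂ)
    (hq0 : 0 < ‖q‖) (hq1 : ‖q‖ < 1)
    (hq10 : 0 < ‖q1‖) (hq11 : ‖q1‖ < 1)
    (hC : ∀ n : ℕ, qPoch q C n ≠ 0)
    (hC0 : C ≠ 0) (hC1 : C ≠ 1) (hx : ‖x‖ < 1) (hy0 : 0 < ‖y‖) (hy : ‖y‖ < 1) :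
    jackson q (fun u => Phi1 q q1 A B C x u) y =
      (1 / (1 - q)) *
        (((1 - A / C) / (1 - C)) * Phi1 q q1 A B (q * C) x y
          + (A / C) * Phi1 q q1 A B C x y) := by
  -- basic nonvanishing facts
  have hy' : y ≠ 0 := by
    intro h; rw [h] at hy0; simp at hy0
  have h1q : (1 : ℂ) - q ≠ 0 := by
    intro h
    have : q = 1 := by linear_combination -h
    rw [this] at hq1; simp at hq1
  have h1C : (1 : ℂ) - C ≠ 0 := by
    intro h
    exact hC1 (by linear_combination -h)
  have hqC : ∀ n, qPoch q (q * C) n ≠ 0 := by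
    intro n h
    have := qPoch_shift q C n
    rw [h, mul_zero] at this
    exact hC (n + 1) this.symm
  have hqy : Complex.abs (q * y) < 1 := by
    rw [map_mul]
    calc Complex.abs q * Complex.abs y ≤ 1 * Complex.abs y :=
          mul_le_mul_of_nonneg_right hq1.le (Complex.abs.nonneg y)
      _ < 1 := by simpa [Complex.norm_eq_abs] using hy
  -- summability
  have hS1 : Summable (hterm q q1 A B C x y) := summable_hterm _ _ _ _ _ _ _ hq1 hq11 hC hx hy
  have hS2 : Summable (hterm q q1 A B C x (q * y)) :=
    summable_hterm _ _ _ _ _ _ _ hq1 hq11 hC hx hqy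
  have hS3 : Summable (hterm q q1 A B (q * C) x y) :=
    summable_hterm _ _ _ _ _ _ _ hq1 hq11 hqC hx hy
  -- rewrite both sides as single tsums
  simp only [jackson]
  rw [Phi1_eq_tsum, Phi1_eq_tsum, Phi1_eq_tsum,
    ← Summable.tsum_sub hS1 hS2, ← tsum_div_const, ← tsum_mul_left, ← tsum_mul_left,
    ← Summable.tsum_add (hS3.mul_left _) (hS1.mul_left _), ← tsum_mul_left]
  -- reindex the left-hand side
  have hinj : Function.Injective (fun p : ℕ × ℕ => (p.1, p.2 + 1)) := by
    intro a b h
    simp only [Prod.mk.injEq] at h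
    exact Prod.ext h.1 (by omega)
  have hsupp : Function.support
      (fun p : ℕ × ℕ => (hterm q q1 A B C x y p - hterm q q1 A B C x (q * y) p) / ((1 - q) * y))
      ⊆ Set.range (fun p : ℕ × ℕ => (p.1, p.2 + 1)) := by
    rintro ⟨l, k⟩ hp
    cases k with
    | zero =>
      exfalso
      apply hp
      simp [hterm]
    | succ k => exact ⟨(l, k), rfl⟩
  rw [← Function.Injective.tsum_eq hinj hsupp]
  apply tsum_congr
  rintro ⟨l, k⟩
  -- pointwise identity
  simp only [hterm]
  have hidx : l + (k + 1) = (l + k) + 1 := rfl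
  rw [hidx, qPoch_succ q A (l + k), qPoch_succ q C (l + k), qPoch_succ q q k]
  have hshift : qPoch q (q * C) (l + k) = qPoch q C (l + k) * (1 - C * q ^ (l + k)) / (1 - C) := by
    have h := qPoch_shift q C (l + k)
    rw [qPoch_succ] at h
    field_simp
    linear_combination h
  rw [hshift, mul_pow q y (k + 1), pow_succ q k, pow_succ y k]
  have hCn : qPoch q C (l + k) ≠ 0 := hC (l + k)
  have hCf : (1 : ℂ) - C * q ^ (l + k) ≠ 0 := by
    intro h
    apply hC (l + k + 1)
    rw [qPoch_succ, h, mul_zero]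
  have h1 : qPoch q1 q1 l ≠ 0 := qPoch_base_ne_zero q1 hq11 l
  have hqk : qPoch q q k ≠ 0 := qPoch_base_ne_zero q hq1 k
  have hqf : (1 : ℂ) - q * q ^ k ≠ 0 := by
    have := qPoch_base_ne_zero q hq1 (k + 1)
    rw [qPoch_succ] at this
    exact right_ne_zero_of_mul this
  exact key_alg (qPoch q A (l + k)) (qPoch q1 B l) (qPoch q C (l + k)) (qPoch q1 q1 l)
    (qPoch q q k) (x ^ l) (y ^ k) (q ^ (l + k)) (q ^ k) q A C y
    hCn hCf h1 hqk hqf h1q hy' hC0 h1C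
end

section
/- For all parameters A, B, C ∈ ℂ with (C;q)_n ≠ 0 for all n, all y ∈ ℂ with |y| < 1, and all x ∈ ℂ with 0 < |x| < 1, one has (1−B)·Φ₁(A,q₁B;C;q,q₁;x,y) = (1−B)·Φ₁(A,B;C;q,q₁;x,y) + B·(1−q₁)·x·(D_{q₁} f)(x), where f is the function x ↦ Φ₁(A,B;C;q,q₁;x,y) and D_{q₁} is the Jackson q₁-derivative in x. (Equation (2.25).) -/
open Complex

lemma prod_one_sub_ge (s : Finset ℕ) (t : ℕ → ℝ) (h0 : ∀ i ∈ s, 0 ≤ t i)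
    (h1 : ∀ i ∈ s, t i ≤ 1) : 1 - ∑ i ∈ s, t i ≤ ∏ i ∈ s, (1 - t i) := by
  induction s using Finset.cons_induction with
  | empty => simp
  | cons a s ha ih =>
    rw [Finset.prod_cons, Finset.sum_cons]
    have h0' : ∀ i ∈ s, 0 ≤ t i := fun i hi => h0 i (Finset.mem_cons_of_mem hi)
    have h1' : ∀ i ∈ s, t i ≤ 1 := fun i hi => h1 i (Finset.mem_cons_of_mem hi)
    have ha0 : 0 ≤ t a := h0 a (Finset.mem_cons_self a s)
    have ha1 : t a ≤ 1 := h1 a (Finset.mem_cons_self a s)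
    have hsum : 0 ≤ ∑ i ∈ s, t i := Finset.sum_nonneg h0'
    calc 1 - (t a + ∑ i ∈ s, t i) ≤ (1 - t a) * (1 - ∑ i ∈ s, t i) := by nlinarith
    _ ≤ (1 - t a) * ∏ i ∈ s, (1 - t i) := by
        exact mul_le_mul_of_nonneg_left (ih h0' h1') (by linarith)

/-- Uniform upper bound for |(z;q)_n|. -/
lemma qPoch_abs_le (q z : ℂ) (hq : ‖q‖ < 1) :
    ∀ n, ‖qPoch q z n‖ ≤ Real.exp (‖z‖ / (1 - ‖q‖)) := by
  intro n
  have hq0 : (0:ℝ) ≤ ‖q‖ := norm_nonneg q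
  have h1q : (0:ℝ) < 1 - ‖q‖ := by linarith
  have hstep : ‖qPoch q z n‖ ≤
      ∏ r ∈ Finset.range n, (1 + ‖z‖ * ‖q‖ ^ r) := by
    rw [qPoch, norm_prod]
    refine Finset.prod_le_prod (fun i _ => norm_nonneg _) (fun i _ => ?_)
    calc ‖1 - z * q ^ i‖ ≤ ‖1‖ + ‖z * q ^ i‖ :=
          norm_sub_le _ _
    _ = 1 + ‖z‖ * ‖q‖ ^ i := by simp [norm_mul, norm_pow]
  refine hstep.trans ?_
  have hexp : ∏ r ∈ Finset.range n, (1 + ‖z‖ * ‖q‖ ^ r) ≤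
      Real.exp (∑ r ∈ Finset.range n, ‖z‖ * ‖q‖ ^ r) := by
    rw [Real.exp_sum]
    refine Finset.prod_le_prod (fun i _ => by positivity) (fun i _ => ?_)
    have := Real.add_one_le_exp (‖z‖ * ‖q‖ ^ i)
    linarith
  refine hexp.trans (Real.exp_le_exp.2 ?_)
  have hsum : ∑ r ∈ Finset.range n, ‖z‖ * ‖q‖ ^ r
      = ‖z‖ * ∑ r ∈ Finset.range n, ‖q‖ ^ r := by
    rw [Finset.mul_sum]
  rw [hsum, div_eq_mul_inv]
  refine mul_le_mul_of_nonneg_left ?_ (norm_nonneg z)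
  calc ∑ r ∈ Finset.range n, ‖q‖ ^ r
      ≤ ∑' r : ℕ, ‖q‖ ^ r :=
        Summable.sum_le_tsum _ (fun i _ => by positivity) (summable_geometric_of_lt_one hq0 hq)
    _ = (1 - ‖q‖)⁻¹ := tsum_geometric_of_lt_one hq0 hq

/-- Uniform positive lower bound for |(z;q)_n| when all (z;q)_n ≠ 0. -/
lemma qPoch_abs_lower (q z : ℂ) (hq : ‖q‖ < 1)
    (hz : ∀ n, qPoch q z n ≠ 0) :
    ∃ c : ℝ, 0 < c ∧ ∀ n, c ≤ ‖qPoch q z n‖ := by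
  have hq0 : (0:ℝ) ≤ ‖q‖ := norm_nonneg q
  have h1q : (0:ℝ) < 1 - ‖q‖ := by linarith
  -- choose N with |z| * |q|^N / (1 - |q|) ≤ 1/2
  obtain ⟨N, hN⟩ : ∃ N : ℕ, ‖z‖ * ‖q‖ ^ N / (1 - ‖q‖) ≤ 1/2 := by
    rcases eq_or_lt_of_le (norm_nonneg z) with hz0 | hz0
    · exact ⟨0, by rw [← hz0]; norm_num⟩
    · have hlim : Filter.Tendsto (fun n : ℕ => ‖z‖ * ‖q‖ ^ n / (1 - ‖q‖))
          Filter.atTop (nhds 0) := by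
        have := tendsto_pow_atTop_nhds_zero_of_lt_one hq0 hq
        have h := (this.const_mul (‖z‖)).div_const (1 - ‖q‖)
        simpa using h
      have := hlim.eventually (eventually_le_nhds (by norm_num : (0:ℝ) < 1/2))
      exact this.exists
  -- tail factor bound: for any m, |∏_{r<m} (1 - z q^{N+r})| ≥ 1/2
  have htail : ∀ m : ℕ, (1/2 : ℝ) ≤
      ‖∏ r ∈ Finset.range m, (1 - z * q ^ (N + r))‖ := by
    intro m
    have hfac : ∀ r ∈ Finset.range m,
        (1 - ‖z‖ * ‖q‖ ^ (N + r)) ≤ ‖1 - z * q ^ (N + r)‖ := by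
      intro r _
      have h1 : ‖z * q ^ (N + r)‖ = ‖z‖ * ‖q‖ ^ (N + r) := by
        simp [norm_mul, norm_pow]
      have h2 := norm_add_le (1 - z * q ^ (N + r)) (z * q ^ (N + r))
      simp only [sub_add_cancel, norm_one] at h2
      linarith [h2, h1.le, h1.ge]
    have hsum_le : ∑ r ∈ Finset.range m, ‖z‖ * ‖q‖ ^ (N + r) ≤ 1/2 := by
      calc ∑ r ∈ Finset.range m, ‖z‖ * ‖q‖ ^ (N + r)
          = ‖z‖ * ‖q‖ ^ N * ∑ r ∈ Finset.range m, ‖q‖ ^ r := by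
            rw [Finset.mul_sum]; exact Finset.sum_congr rfl (fun r _ => by rw [pow_add]; ring
            )
        _ ≤ ‖z‖ * ‖q‖ ^ N * (1 - ‖q‖)⁻¹ := by
            refine mul_le_mul_of_nonneg_left ?_ (by positivity)
            calc ∑ r ∈ Finset.range m, ‖q‖ ^ r
                ≤ ∑' r : ℕ, ‖q‖ ^ r :=
                  Summable.sum_le_tsum _ (fun i _ => by positivity) (summable_geometric_of_lt_one hq0 hq)
              _ = (1 - ‖q‖)⁻¹ := tsum_geometric_of_lt_one hq0 hq
        _ ≤ 1/2 := by rw [div_eq_mul_inv] at hN; exact hN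
    have hterm : ∀ r ∈ Finset.range m, ‖z‖ * ‖q‖ ^ (N + r) ≤ 1 := by
      intro r hr
      have hnn : (0:ℝ) ≤ ‖z‖ * ‖q‖ ^ (N + r) := by positivity
      have : ‖z‖ * ‖q‖ ^ (N + r) ≤ 1/2 :=
        le_trans (Finset.single_le_sum (f := fun i => ‖z‖ * ‖q‖ ^ (N + i)) (fun i _ => mul_nonneg (norm_nonneg z) (pow_nonneg hq0 _)) hr) hsum_le
      linarith
    calc (1/2 : ℝ) ≤ 1 - ∑ r ∈ Finset.range m, ‖z‖ * ‖q‖ ^ (N + r) := by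
          linarith
      _ ≤ ∏ r ∈ Finset.range m, (1 - ‖z‖ * ‖q‖ ^ (N + r)) :=
          prod_one_sub_ge _ _ (fun i _ => by positivity) hterm
      _ ≤ ‖∏ r ∈ Finset.range m, (1 - z * q ^ (N + r))‖ := by
          rw [norm_prod]
          refine Finset.prod_le_prod (fun i hi => ?_) hfac
          have := hterm i hi; linarith
  -- combine: small n by finiteness, large n by splitting
  set c0 : ℝ := (Finset.range (N + 1)).inf' (by simp) (fun n => ‖qPoch q z n‖) with hc0
  have hc0pos : 0 < c0 := by
    rw [hc0, Finset.lt_inf'_iff]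
    intro i _
    exact norm_pos_iff.mpr (hz i)
  refine ⟨c0 / 2, by linarith, fun n => ?_⟩
  rcases le_or_gt n N with hn | hn
  · have : c0 ≤ ‖qPoch q z n‖ :=
      Finset.inf'_le _ (Finset.mem_range.2 (Nat.lt_succ_of_le hn))
    linarith
  · obtain ⟨m, rfl⟩ : ∃ m, n = N + m := ⟨n - N, by omega⟩
    have hsplit : qPoch q z (N + m) = qPoch q z N * ∏ r ∈ Finset.range m, (1 - z * q ^ (N + r)) := by
      rw [qPoch, qPoch, Finset.prod_range_add]
    rw [hsplit, norm_mul]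
    have h1 : c0 ≤ ‖qPoch q z N‖ :=
      Finset.inf'_le _ (Finset.mem_range.2 (Nat.lt_succ_self N))
    have h2 := htail m
    calc c0 / 2 ≤ ‖qPoch q z N‖ * (1/2) := by linarith
      _ ≤ ‖qPoch q z N‖ * ‖∏ r ∈ Finset.range m, (1 - z * q ^ (N + r))‖ :=
        mul_le_mul_of_nonneg_left h2 (norm_nonneg _)


lemma qPoch_self_ne_zero (q : ℂ) (hq : ‖q‖ < 1) (n : ℕ) : qPoch q q n ≠ 0 := by
  rw [qPoch]
  refine Finset.prod_ne_zero_iff.2 (fun r _ => ?_)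
  intro h
  have h1 : q * q ^ r = 1 := by
    have := sub_eq_zero.mp h
    linear_combination -this
  have : ‖q * q ^ r‖ < 1 := by
    rw [norm_mul, norm_pow]
    calc ‖q‖ * ‖q‖ ^ r ≤ ‖q‖ * 1 := by
          refine mul_le_mul_of_nonneg_left ?_ (norm_nonneg q)
          exact pow_le_one₀ (norm_nonneg q) hq.le
      _ < 1 := by rw [mul_one]; exact hq
  rw [h1, norm_one] at this
  exact lt_irrefl 1 this

lemma phi1_summable (q q1 A B C x y : ℂ)
    (hq1 : ‖q‖ < 1) (hq11 : ‖q1‖ < 1)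
    (hC : ∀ n : ℕ, qPoch q C n ≠ 0)
    (hx : ‖x‖ < 1) (hy : ‖y‖ < 1) :
    Summable (fun p : ℕ × ℕ =>
      qPoch q A (p.1 + p.2) * qPoch q1 B p.1 /
        (qPoch q C (p.1 + p.2) * qPoch q1 q1 p.1 * qPoch q q p.2) * x ^ p.1 * y ^ p.2) := by
  obtain ⟨cC, hcC, hcCle⟩ := qPoch_abs_lower q C hq1 hC
  obtain ⟨c1, hc1, hc1le⟩ := qPoch_abs_lower q1 q1 hq11 (qPoch_self_ne_zero q1 hq11)
  obtain ⟨cq, hcq, hcqle⟩ := qPoch_abs_lower q q hq1 (qPoch_self_ne_zero q hq1)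
  set MA := Real.exp (‖A‖ / (1 - ‖q‖)) with hMA
  set MB := Real.exp (‖B‖ / (1 - ‖q1‖)) with hMB
  have hMApos : 0 < MA := Real.exp_pos _
  have hMBpos : 0 < MB := Real.exp_pos _
  set M : ℝ := MA * MB / (cC * c1 * cq) with hM
  have hMpos : 0 < M := by positivity
  have hxa : (0:ℝ) ≤ ‖x‖ := norm_nonneg x
  have hya : (0:ℝ) ≤ ‖y‖ := norm_nonneg y
  have hsummaj : Summable (fun p : ℕ × ℕ =>
      (M * ‖x‖ ^ p.1) * ‖y‖ ^ p.2) := by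
    have hf : Summable (fun ℓ : ℕ => M * ‖x‖ ^ ℓ) :=
      (summable_geometric_of_lt_one hxa hx).mul_left M
    have hg : Summable (fun k : ℕ => ‖y‖ ^ k) := summable_geometric_of_lt_one hya hy
    exact hf.mul_of_nonneg hg (fun ℓ => by positivity) (fun k => by positivity)
  refine Summable.of_norm_bounded hsummaj (fun p => ?_)
  have hbound : ‖qPoch q A (p.1 + p.2) * qPoch q1 B p.1 /
      (qPoch q C (p.1 + p.2) * qPoch q1 q1 p.1 * qPoch q q p.2)‖ ≤ M := by
    rw [norm_div, norm_mul, norm_mul, norm_mul]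
    rw [hM]
    refine div_le_div₀ (by positivity) ?_ (by positivity) ?_
    · exact mul_le_mul (qPoch_abs_le q A hq1 _) (qPoch_abs_le q1 B hq11 _)
        (norm_nonneg _) hMApos.le
    · refine mul_le_mul (mul_le_mul (hcCle _) (hc1le _) hc1.le (norm_nonneg _))
        (hcqle _) hcq.le ?_
      positivity
  calc ‖qPoch q A (p.1 + p.2) * qPoch q1 B p.1 /
        (qPoch q C (p.1 + p.2) * qPoch q1 q1 p.1 * qPoch q q p.2) * x ^ p.1 * y ^ p.2‖
      = ‖qPoch q A (p.1 + p.2) * qPoch q1 B p.1 /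
        (qPoch q C (p.1 + p.2) * qPoch q1 q1 p.1 * qPoch q q p.2)‖ *
          ‖x‖ ^ p.1 * ‖y‖ ^ p.2 := by
        rw [norm_mul, norm_mul, norm_pow, norm_pow]
    _ ≤ M * ‖x‖ ^ p.1 * ‖y‖ ^ p.2 := by
        refine mul_le_mul_of_nonneg_right (mul_le_mul_of_nonneg_right hbound (by positivity))
          (by positivity)

lemma qPoch_shift_s18 (q1 B : ℂ) (n : ℕ) :
    (1 - B) * qPoch q1 (q1 * B) n = qPoch q1 B n * (1 - B * q1 ^ n) := by
  induction n with
  | zero => simp [qPoch]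
  | succ n ih =>
    have e1 : qPoch q1 (q1 * B) (n + 1) = qPoch q1 (q1 * B) n * (1 - q1 * B * q1 ^ n) := by
      simp [qPoch, Finset.prod_range_succ]
    have e2 : qPoch q1 B (n + 1) = qPoch q1 B n * (1 - B * q1 ^ n) := by
      simp [qPoch, Finset.prod_range_succ]
    rw [e1, e2]
    linear_combination (1 - B * q1 ^ (n + 1)) * ih

theorem stmt18 (q q1 A B C x y : ℂ)
    (hq0 : 0 < ‖q‖) (hq1 : ‖q‖ < 1)
    (hq10 : 0 < ‖q1‖) (hq11 : ‖q1‖ < 1)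
    (hC : ∀ n : ℕ, qPoch q C n ≠ 0)
    (hx0 : 0 < ‖x‖) (hx : ‖x‖ < 1) (hy : ‖y‖ < 1) :
    (1 - B) * Phi1 q q1 A (q1 * B) C x y =
      (1 - B) * Phi1 q q1 A B C x y
        + B * (1 - q1) * x * jackson q1 (fun t => Phi1 q q1 A B C t y) x := by
  have hxne : x ≠ 0 := by
    intro h; rw [h, norm_zero] at hx0; exact lt_irrefl 0 hx0
  have hq1ne : (1 : ℂ) - q1 ≠ 0 := by
    intro h
    have : q1 = 1 := by linear_combination -h
    rw [this, norm_one] at hq11; exact lt_irrefl 1 hq11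
  have hq1x : ‖q1 * x‖ < 1 := by
    rw [norm_mul]
    calc ‖q1‖ * ‖x‖ ≤ 1 * ‖x‖ :=
          mul_le_mul_of_nonneg_right hq11.le (norm_nonneg x)
      _ = ‖x‖ := one_mul _
      _ < 1 := hx
  have hs1 := phi1_summable q q1 A B C x y hq1 hq11 hC hx hy
  have hs2 := phi1_summable q q1 A B C (q1 * x) y hq1 hq11 hC hq1x hy
  have key : (1 - B) * Phi1 q q1 A (q1 * B) C x y
      = Phi1 q q1 A B C x y - B * Phi1 q q1 A B C (q1 * x) y := by
    rw [Phi1, ← tsum_mul_left]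
    rw [show Phi1 q q1 A B C x y - B * Phi1 q q1 A B C (q1 * x) y
        = ∑' p : ℕ × ℕ,
          (qPoch q A (p.1 + p.2) * qPoch q1 B p.1 /
            (qPoch q C (p.1 + p.2) * qPoch q1 q1 p.1 * qPoch q q p.2) * x ^ p.1 * y ^ p.2
          - B * (qPoch q A (p.1 + p.2) * qPoch q1 B p.1 /
            (qPoch q C (p.1 + p.2) * qPoch q1 q1 p.1 * qPoch q q p.2) * (q1 * x) ^ p.1 * y ^ p.2))
        from by rw [Summable.tsum_sub hs1 (hs2.mul_left B), Phi1, Phi1, tsum_mul_left]]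
    refine tsum_congr (fun p => ?_)
    have h1 : (1 - B) * qPoch q1 (q1 * B) p.1 = qPoch q1 B p.1 * (1 - B * q1 ^ p.1) :=
      qPoch_shift_s18 q1 B p.1
    have h2 : (q1 * x) ^ p.1 = q1 ^ p.1 * x ^ p.1 := mul_pow _ _ _
    rw [h2]
    linear_combination (qPoch q A (p.1 + p.2) /
      (qPoch q C (p.1 + p.2) * qPoch q1 q1 p.1 * qPoch q q p.2) * x ^ p.1 * y ^ p.2) * h1
  rw [key, jackson]
  have hne : (1 - q1) * x ≠ 0 := mul_ne_zero hq1ne hxne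
  field_simp
  ring
end
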